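/- Let p be an odd prime, m = 2s a positive even integer with gcd(m,p) = 1, q = p^m, and α a primitive element of F_q. Then Σ_{y ∈ F_p^*} Σ_{i=0}^{p} ζ_p^{Tr_{q/p}(y·α^{(q−1)i/(p+1)})} = 2·η_0^{(2,p^2)}, where η_0^{(2,p^2)} is the Gaussian period of order 2 over F_{p^2} (relative to the primitive element β = α^{(q−1)/(p^2−1)} of F_{p^2}). -/

import Mathlib

/-- The canonical additive character of a finite field `F` of characteristic `p`:
`χ(x) = ζ_p ^ Tr_{F/F_p}(x)` where `ζ_p = e^{2π√-1/p}`. -/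
noncomputable def canonChar (p : ℕ) (F : Type*) [Field F] [Fintype F] [Algebra (ZMod p) F]
    (x : F) : ℂ :=
  Complex.exp (2 * Real.pi * Complex.I / p) ^ ((Algebra.trace (ZMod p) F) x).val

-- The Gaussian period `η_i^{(N,q)} = ∑_{x ∈ C_i^{(N,q)}} χ(x)`, where
-- `C_i^{(N,q)} = α^i ⟨α^N⟩` is a cyclotomic class of order `N` w.r.t. the primitive element `α`.
open scoped Classical in
noncomputable def gaussPeriod (p : ℕ) (F : Type*) [Field F] [Fintype F] [Algebra (ZMod p) F]
    (α : F) (N i : ℕ) : ℂ :=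
  ∑ x ∈ Finset.univ.filter (fun x : F => ∃ j : ℕ, x = α ^ (i + N * j)), canonChar p F x

open scoped Classical

/-! ### Auxiliary lemmas -/

lemma pow_modEq_of_pow_eq {E : Type*} [Monoid E] {a : E} (ha : orderOf a ≠ 0)
    {i j : ℕ} (h : a ^ i = a ^ j) : i % orderOf a = j % orderOf a := by
  have h1 : a ^ orderOf a = 1 := pow_orderOf_eq_one a
  set u : Eˣ := Units.ofPowEqOne a (orderOf a) h1 ha with hu
  have hua : (u : E) = a := rfl
  have hou : orderOf u = orderOf a := by rw [← orderOf_units, hua]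
  have huij : u ^ i = u ^ j := Units.ext (by simpa [hua] using h)
  have := pow_inj_mod.mp huij
  rwa [hou] at this

lemma sum_pow_filter {E : Type*} [Field E] [Fintype E] (a : E) (ha : orderOf a ≠ 0) (f : E → ℂ) :
    ∑ x ∈ Finset.univ.filter (fun x : E => ∃ j : ℕ, x = a ^ j), f x
      = ∑ j ∈ Finset.range (orderOf a), f (a ^ j) := by
  have him : Finset.univ.filter (fun x : E => ∃ j : ℕ, x = a ^ j)
      = (Finset.range (orderOf a)).image (fun j => a ^ j) := by
    ext x
    simp only [Finset.mem_filter, Finset.mem_univ, true_and, Finset.mem_image, Finset.mem_range]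
    constructor
    · rintro ⟨j, rfl⟩
      exact ⟨j % orderOf a, Nat.mod_lt _ (Nat.pos_of_ne_zero ha), pow_mod_orderOf a j⟩
    · rintro ⟨j, _, rfl⟩; exact ⟨j, rfl⟩
  rw [him]
  refine Finset.sum_image ?_
  intro i hi j hj hij
  have := pow_modEq_of_pow_eq ha hij
  rwa [Nat.mod_eq_of_lt (Finset.mem_range.mp hi), Nat.mod_eq_of_lt (Finset.mem_range.mp hj)] at this

lemma order_of_sq (r : ℕ) (hr : 1 ≤ r) {E : Type*} [Field E] [Fintype E]
    (β : E) (hβ : orderOf β = 2*r*(2*r+2)) : orderOf (β ^ 2) = 2*r*(r+1) := by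
  rw [orderOf_pow' _ (by norm_num : (2:ℕ) ≠ 0), hβ]
  have hg : Nat.gcd (2*r*(2*r+2)) 2 = 2 := by
    rw [Nat.gcd_comm]
    exact Nat.gcd_eq_left (dvd_mul_of_dvd_left (dvd_mul_right 2 r) _)
  rw [hg]
  have h1 : 2*r*(2*r+2) = 2*(2*r*(r+1)) := by ring
  rw [h1, Nat.mul_div_cancel_left _ (by norm_num)]

lemma core_injOn (r : ℕ) (hr : 1 ≤ r) {E : Type*} [Field E] [Fintype E]
    (β : E) (hβ : orderOf β = 2*r*(2*r+2)) (δ : ℕ) :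
    Set.InjOn (fun ki : ℕ × ℕ => β ^ ((2*r+2) * ki.1 + (2*r) * ki.2 + δ))
      (((Finset.range (2*r)) ×ˢ (Finset.range (r+1)) : Finset (ℕ × ℕ)) : Set (ℕ × ℕ)) := by
  have ho : orderOf β ≠ 0 := by
    rw [hβ]; exact Nat.mul_ne_zero (by omega) (by omega)
  rintro ⟨k₁, i₁⟩ h₁ ⟨k₂, i₂⟩ h₂ hg
  simp only [Finset.coe_product, Set.mem_prod, Finset.mem_coe, Finset.mem_range] at h₁ h₂
  obtain ⟨hk₁, hi₁⟩ := h₁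
  obtain ⟨hk₂, hi₂⟩ := h₂
  have hmod := pow_modEq_of_pow_eq ho hg
  rw [hβ] at hmod
  have hdvd : ((2*r*(2*r+2) : ℕ) : ℤ) ∣
      (((2*r+2) * k₂ + (2*r) * i₂ + δ : ℕ) : ℤ) - (((2*r+2) * k₁ + (2*r) * i₁ + δ : ℕ) : ℤ) :=
    (Nat.modEq_iff_dvd).mp hmod
  push_cast at hdvd
  set R : ℤ := (r : ℤ) with hR
  have hdvd' : ((2*R+2) * (2*R)) ∣ ((2*R+2) * ((k₂ : ℤ) - k₁) + (2*R) * ((i₂ : ℤ) - i₁)) := by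
    convert hdvd using 1 <;> push_cast <;> ring
  have hb : (2*R+2) ∣ ((2*R) * ((i₂ : ℤ) - i₁)) := by
    have h1 : (2*R+2) ∣ ((2*R+2) * ((k₂ : ℤ) - k₁) + (2*R) * ((i₂ : ℤ) - i₁)) :=
      dvd_trans (Dvd.intro _ rfl) hdvd'
    have h2 := h1.sub (Dvd.intro ((k₂ : ℤ) - k₁) rfl)
    convert h2 using 1; exact rfl; ring
  have hb2 : (2*R+2) ∣ (2 * ((i₂ : ℤ) - i₁)) := by
    have h3 := (Dvd.intro ((i₂ : ℤ) - i₁) rfl : (2*R+2) ∣ (2*R+2) * ((i₂ : ℤ) - i₁)).sub hb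
    convert h3 using 1; exact rfl; ring
  have hi0 : 2 * ((i₂ : ℤ) - i₁) = 0 := by
    refine Int.eq_zero_of_abs_lt_dvd hb2 ?_
    rw [abs_lt]
    constructor <;> omega
  have hii : i₁ = i₂ := by omega
  subst hii
  have hk : (2*R) ∣ ((k₂ : ℤ) - k₁) := by
    have h4 : (2*R+2) * (2*R) ∣ (2*R+2) * ((k₂ : ℤ) - k₁) := by
      convert hdvd' using 1; ring
    exact (mul_dvd_mul_iff_left (by rw [hR]; omega : (2*R+2) ≠ 0)).mp h4
  have hk0 : (k₂ : ℤ) - k₁ = 0 := by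
    refine Int.eq_zero_of_abs_lt_dvd hk ?_
    rw [abs_lt]
    constructor <;> omega
  have : k₁ = k₂ := by omega
  simp [this]

lemma core_sum (r : ℕ) (hr : 1 ≤ r) {E : Type*} [Field E] [Fintype E]
    (β : E) (hβ : orderOf β = 2*r*(2*r+2)) (δ : ℕ) (hδ : 2 ∣ δ) (f : E → ℂ) :
    ∑ k ∈ Finset.range (2*r), ∑ i ∈ Finset.range (r+1),
        f (β ^ ((2*r+2) * k + (2*r) * i + δ))
      = ∑ j ∈ Finset.range (2*r*(r+1)), f (β ^ (2*j)) := by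
  have ho : orderOf β ≠ 0 := by
    rw [hβ]; exact Nat.mul_ne_zero (by omega) (by omega)
  have ho2 : orderOf (β ^ 2) = 2*r*(r+1) := order_of_sq r hr β hβ
  have ho2' : orderOf (β ^ 2) ≠ 0 := by rw [ho2]; exact Nat.mul_ne_zero (by omega) (by omega)
  have hinj2 : ∀ x ∈ Finset.range (2*r*(r+1)), ∀ y ∈ Finset.range (2*r*(r+1)),
      β ^ (2*x) = β ^ (2*y) → x = y := by
    intro x hx y hy hxy
    rw [pow_mul, pow_mul] at hxy
    have := pow_modEq_of_pow_eq ho2' hxy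
    rwa [ho2, Nat.mod_eq_of_lt (Finset.mem_range.mp hx),
      Nat.mod_eq_of_lt (Finset.mem_range.mp hy)] at this
  have hR : ∑ j ∈ Finset.range (2*r*(r+1)), f (β ^ (2*j))
      = ∑ x ∈ (Finset.range (2*r*(r+1))).image (fun j => β ^ (2*j)), f x :=
    (Finset.sum_image hinj2).symm
  have hIO := core_injOn r hr β hβ δ
  have hL : ∑ k ∈ Finset.range (2*r), ∑ i ∈ Finset.range (r+1),
        f (β ^ ((2*r+2) * k + (2*r) * i + δ))
      = ∑ x ∈ ((Finset.range (2*r)) ×ˢ (Finset.range (r+1))).image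
          (fun ki : ℕ × ℕ => β ^ ((2*r+2) * ki.1 + (2*r) * ki.2 + δ)), f x := by
    rw [Finset.sum_image (fun x hx y hy h => hIO (by simpa using hx) (by simpa using hy) h)]
    rw [← Finset.sum_product']
  rw [hL, hR]
  congr 1
  apply Finset.eq_of_subset_of_card_le
  · intro x hx
    simp only [Finset.mem_image, Finset.mem_product, Finset.mem_range] at hx ⊢
    obtain ⟨⟨k, i⟩, ⟨hk, hi⟩, rfl⟩ := hx
    obtain ⟨d, hd⟩ := hδ
    have he : (2*r+2) * k + (2*r) * i + δ = 2 * ((r+1)*k + r*i + d) := by rw [hd]; ring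
    rw [he, pow_mul]
    refine ⟨((r+1)*k + r*i + d) % (2*r*(r+1)), ?_, ?_⟩
    · rw [← ho2]; exact Nat.mod_lt _ (Nat.pos_of_ne_zero ho2')
    · rw [pow_mul, ← ho2, pow_mod_orderOf]
  · rw [Finset.card_image_of_injOn hIO]
    calc ((Finset.range (2*r*(r+1))).image (fun j => β ^ (2*j))).card
        ≤ (Finset.range (2*r*(r+1))).card := Finset.card_image_le
      _ = 2*r*(r+1) := Finset.card_range _
      _ = ((Finset.range (2*r)) ×ˢ (Finset.range (r+1))).card := by
          rw [Finset.card_product, Finset.card_range, Finset.card_range]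

lemma sum_units (p r : ℕ) [NeZero p] (hp : p.Prime) (hpr : p = 2*r+1) (hr : 1 ≤ r)
    {E : Type*} [Field E] [Fintype E] [Algebra (ZMod p) E]
    (β : E) (hβ : orderOf β = 2*r*(2*r+2)) (f : E → ℂ) :
    ∑ y ∈ Finset.univ.filter (fun y : ZMod p => y ≠ 0), f (algebraMap (ZMod p) E y)
      = ∑ k ∈ Finset.range (2*r), f (β ^ ((2*r+2) * k)) := by
  haveI := Fact.mk hp
  have ho : orderOf β ≠ 0 := by
    rw [hβ]; exact Nat.mul_ne_zero (by omega) (by omega)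
  set a : E := β ^ (2*r+2) with ha
  have hoa : orderOf a = 2*r := by
    rw [ha, orderOf_pow' _ (by omega : 2*r+2 ≠ 0), hβ]
    have hg : Nat.gcd (2*r*(2*r+2)) (2*r+2) = 2*r+2 := by
      rw [Nat.gcd_comm]
      exact Nat.gcd_eq_left (dvd_mul_left _ _)
    rw [hg]
    have h1 : 2*r*(2*r+2) = (2*r+2)*(2*r) := by ring
    rw [h1, Nat.mul_div_cancel_left _ (by omega)]
  have hoa' : orderOf a ≠ 0 := by rw [hoa]; omega
  have hψ : Function.Injective (algebraMap (ZMod p) E) := (algebraMap (ZMod p) E).injective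
  have hL : ∑ y ∈ Finset.univ.filter (fun y : ZMod p => y ≠ 0), f (algebraMap (ZMod p) E y)
      = ∑ x ∈ (Finset.univ.filter (fun y : ZMod p => y ≠ 0)).image (algebraMap (ZMod p) E),
          f x :=
    (Finset.sum_image (fun x _ y _ h => hψ h)).symm
  have hinj : ∀ x ∈ Finset.range (2*r), ∀ y ∈ Finset.range (2*r), a ^ x = a ^ y → x = y := by
    intro x hx y hy hxy
    have := pow_modEq_of_pow_eq hoa' hxy
    rwa [hoa, Nat.mod_eq_of_lt (Finset.mem_range.mp hx),
      Nat.mod_eq_of_lt (Finset.mem_range.mp hy)] at this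
  have hRsum : ∑ k ∈ Finset.range (2*r), f (β ^ ((2*r+2) * k))
      = ∑ x ∈ (Finset.range (2*r)).image (fun k => a ^ k), f x := by
    rw [Finset.sum_image hinj]
    refine Finset.sum_congr rfl fun k _ => ?_
    rw [ha, ← pow_mul]
  rw [hL, hRsum]
  congr 1
  set T : Finset E := Finset.univ.filter (fun x : E => x ^ (2*r) = 1) with hT
  have hTcard : T.card ≤ 2*r := by
    have hsub : T ⊆ (Polynomial.nthRoots (2*r) (1:E)).toFinset := by
      intro x hx
      rw [Multiset.mem_toFinset, Polynomial.mem_nthRoots (by omega : 0 < 2*r)]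
      exact (Finset.mem_filter.mp hx).2
    calc T.card ≤ (Polynomial.nthRoots (2*r) (1:E)).toFinset.card := Finset.card_le_card hsub
      _ ≤ Multiset.card (Polynomial.nthRoots (2*r) (1:E)) := Multiset.toFinset_card_le _
      _ ≤ 2*r := Polynomial.card_nthRoots _ _
  have hS1T : (Finset.univ.filter (fun y : ZMod p => y ≠ 0)).image (algebraMap (ZMod p) E) ⊆ T := by
    intro x hx
    simp only [Finset.mem_image, Finset.mem_filter, Finset.mem_univ, true_and] at hx
    obtain ⟨y, hy, rfl⟩ := hx
    rw [hT, Finset.mem_filter]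
    refine ⟨Finset.mem_univ _, ?_⟩
    rw [← map_pow]
    have : y ^ (2*r) = 1 := by
      have h1 := ZMod.pow_card_sub_one_eq_one hy
      rwa [show p - 1 = 2*r by omega] at h1
    rw [this, map_one]
  have hS2T : (Finset.range (2*r)).image (fun k => a ^ k) ⊆ T := by
    intro x hx
    simp only [Finset.mem_image, Finset.mem_range] at hx
    obtain ⟨k, hk, rfl⟩ := hx
    rw [hT, Finset.mem_filter]
    refine ⟨Finset.mem_univ _, ?_⟩
    have h2 : (a : E) ^ k = β ^ ((2*r+2)*k) := by rw [ha, ← pow_mul]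
    rw [h2, ← pow_mul]
    have h3 : (2*r+2)*k*(2*r) = (2*r*(2*r+2))*k := by ring
    rw [h3, pow_mul, ← hβ, pow_orderOf_eq_one, one_pow]
  have hS1card : ((Finset.univ.filter (fun y : ZMod p => y ≠ 0)).image
      (algebraMap (ZMod p) E)).card = 2*r := by
    rw [Finset.card_image_of_injective _ hψ]
    have hfe : Finset.univ.filter (fun y : ZMod p => y ≠ 0) = Finset.univ.erase 0 := by
      ext y; simp [Finset.mem_erase, and_comm]
    rw [hfe, Finset.card_erase_of_mem (Finset.mem_univ _), Finset.card_univ, ZMod.card]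
    omega
  have hS2card : ((Finset.range (2*r)).image (fun k => a ^ k)).card = 2*r := by
    rw [Finset.card_image_of_injOn (fun x hx y hy h => hinj x (by simpa using hx) y
      (by simpa using hy) h), Finset.card_range]
  have h1 : (Finset.univ.filter (fun y : ZMod p => y ≠ 0)).image (algebraMap (ZMod p) E) = T :=
    Finset.eq_of_subset_of_card_le hS1T (by omega)
  have h2 : (Finset.range (2*r)).image (fun k => a ^ k) = T :=
    Finset.eq_of_subset_of_card_le hS2T (by omega)
  rw [h1, h2]

lemma canonChar_iota (p m s : ℕ) [NeZero p] (hp : p.Prime) (hm : m = 2 * s)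
    (F : Type*) [Field F] [Fintype F] [Algebra (ZMod p) F] (hF : Fintype.card F = p ^ m)
    (E : Type*) [Field E] [Fintype E] [Algebra (ZMod p) E] (hE : Fintype.card E = p ^ 2)
    (ι : E →ₐ[ZMod p] F) (x : E) :
    canonChar p F (ι x) = canonChar p E (algebraMap (ZMod p) E (s : ZMod p) * x) := by
  haveI := Fact.mk hp
  letI : Algebra E F := ι.toRingHom.toAlgebra
  haveI : IsScalarTower (ZMod p) E F := IsScalarTower.of_algebraMap_eq fun r => (ι.commutes r).symm
  have hfE : Module.finrank (ZMod p) E = 2 := by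
    have h1 := Module.card_eq_pow_finrank (K := ZMod p) (V := E)
    rw [ZMod.card, hE] at h1
    exact Nat.pow_right_injective hp.two_le h1.symm
  have hfF : Module.finrank (ZMod p) F = m := by
    have h1 := Module.card_eq_pow_finrank (K := ZMod p) (V := F)
    rw [ZMod.card, hF] at h1
    exact Nat.pow_right_injective hp.two_le h1.symm
  have hfEF : Module.finrank E F = s := by
    have h2 := Module.finrank_mul_finrank (ZMod p) E F
    rw [hfE, hfF, hm] at h2
    omega
  have htr : Algebra.trace (ZMod p) F (ι x) = (s : ZMod p) * Algebra.trace (ZMod p) E x := by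
    have h3 : ι x = algebraMap E F x := rfl
    rw [h3, ← Algebra.trace_trace (S := E), Algebra.trace_algebraMap, hfEF, map_nsmul,
      nsmul_eq_mul]
  have htr2 : Algebra.trace (ZMod p) E (algebraMap (ZMod p) E (s : ZMod p) * x)
      = (s : ZMod p) * Algebra.trace (ZMod p) E x := by
    rw [← Algebra.smul_def, map_smul, smul_eq_mul]
  unfold canonChar
  rw [htr, htr2]

/-- for `q = p^m`, `m = 2s` even with `gcd(m,p) = 1`, `α` a primitive
element of `F_q`, and `β = α^{(q-1)/(p²-1)}` the corresponding primitive element of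
the field `F_{p²}` (realized as a field `E` of cardinality `p²` embedded in `F_q`),
`∑_{y ∈ F_p^*} ∑_{i=0}^{p} ζ_p^{Tr_{q/p}(y α^{(q-1)i/(p+1)})} = 2 η_0^{(2,p²)}`. -/
theorem double_sum_eq_two_gauss_period
    (p m s : ℕ) [NeZero p] (hp : p.Prime) (hodd : Odd p) (hm : m = 2 * s) (hs0 : 0 < s)
    (hmp : Nat.gcd m p = 1)
    (F : Type*) [Field F] [Fintype F] [Algebra (ZMod p) F]
    (hF : Fintype.card F = p ^ m)
    (α : F) (hα : orderOf α = p ^ m - 1)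
    (E : Type*) [Field E] [Fintype E] [Algebra (ZMod p) E]
    (hE : Fintype.card E = p ^ 2)
    (β : E) (hβ : orderOf β = p ^ 2 - 1)
    (ι : E →ₐ[ZMod p] F) (hι : ι β = α ^ ((p ^ m - 1) / (p ^ 2 - 1))) :
    ∑ y ∈ Finset.univ.filter (fun y : ZMod p => y ≠ 0),
      ∑ i ∈ Finset.range (p + 1),
        canonChar p F (algebraMap (ZMod p) F y * α ^ ((p ^ m - 1) / (p + 1) * i)) =
      2 * gaussPeriod p E β 2 0 := by
  haveI := Fact.mk hp
  obtain ⟨r, hpr⟩ := hodd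
  have hr : 1 ≤ r := by have := hp.two_le; omega
  have hN2 : p ^ 2 - 1 = 2*r*(2*r+2) := by
    have h1 : p ^ 2 = 2*r*(2*r+2) + 1 := by subst hpr; ring
    omega
  have hβN : orderOf β = 2*r*(2*r+2) := by rw [hβ, hN2]
  have hNpos : 0 < p ^ 2 - 1 := by
    rw [hN2]; exact Nat.mul_pos (by omega) (by omega)
  have hNd : (p ^ 2 - 1) ∣ (p ^ m - 1) := by
    rw [hm, pow_mul]
    simpa using Nat.sub_dvd_pow_sub_pow (p ^ 2) 1 s
  obtain ⟨c, hc⟩ := hNd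
  have he : (p ^ m - 1) / (p ^ 2 - 1) = c := by
    rw [hc, Nat.mul_div_cancel_left _ hNpos]
  have hd : (p ^ m - 1) / (p + 1) = (2*r) * c := by
    have h2 : p ^ m - 1 = (p + 1) * ((2*r) * c) := by
      rw [hc, hN2, hpr]; ring
    rw [h2, Nat.mul_div_cancel_left _ (by omega)]
  -- pointwise rewriting of the summand into `E`
  have key : ∀ (y : ZMod p) (i : ℕ),
      canonChar p F (algebraMap (ZMod p) F y * α ^ ((p ^ m - 1) / (p + 1) * i))
        = canonChar p E (algebraMap (ZMod p) E ((s : ZMod p) * y) * β ^ ((2*r) * i)) := by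
    intro y i
    have hιpow : ι (β ^ ((2*r) * i)) = α ^ ((p ^ m - 1) / (p + 1) * i) := by
      rw [map_pow, hι, he, ← pow_mul, hd]
      congr 1
      ring
    have h4 : algebraMap (ZMod p) F y * α ^ ((p ^ m - 1) / (p + 1) * i)
        = ι (algebraMap (ZMod p) E y * β ^ ((2*r) * i)) := by
      rw [map_mul, hιpow, AlgHom.commutes]
    rw [h4, canonChar_iota p m s hp hm F hF E hE ι, map_mul,
      mul_assoc ((algebraMap (ZMod p) E) ((s : ℕ) : ZMod p)) ((algebraMap (ZMod p) E) y)]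
  have hs' : (s : ZMod p) ≠ 0 := by
    rw [Ne, ZMod.natCast_eq_zero_iff]
    intro hps
    have h5 : p ∣ m := by rw [hm]; exact Dvd.dvd.mul_left hps 2
    have h6 : p ∣ Nat.gcd m p := Nat.dvd_gcd h5 dvd_rfl
    rw [hmp] at h6
    have h7 := hp.two_le
    have h8 := Nat.le_of_dvd one_pos h6
    omega
  -- absorb the factor `s` by reindexing the sum over `y`
  have habs : ∑ y ∈ Finset.univ.filter (fun y : ZMod p => y ≠ 0),
        ∑ i ∈ Finset.range (p+1),
          canonChar p E (algebraMap (ZMod p) E ((s : ZMod p) * y) * β ^ ((2*r) * i))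
      = ∑ y ∈ Finset.univ.filter (fun y : ZMod p => y ≠ 0),
        ∑ i ∈ Finset.range (p+1),
          canonChar p E (algebraMap (ZMod p) E y * β ^ ((2*r) * i)) := by
    refine Finset.sum_nbij' (fun y => (s : ZMod p) * y) (fun y => (s : ZMod p)⁻¹ * y)
      ?_ ?_ ?_ ?_ ?_
    · intro y hy
      simp only [Finset.mem_filter, Finset.mem_univ, true_and] at hy ⊢
      exact mul_ne_zero hs' hy
    · intro y hy
      simp only [Finset.mem_filter, Finset.mem_univ, true_and] at hy ⊢
      exact mul_ne_zero (inv_ne_zero hs') hy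
    · intro y _
      simp [← mul_assoc, inv_mul_cancel₀ hs']
    · intro y _
      simp [← mul_assoc, mul_inv_cancel₀ hs']
    · intro y _
      rfl
  have hsu := sum_units p r hp hpr hr β hβN
    (fun z => ∑ i ∈ Finset.range (p+1), canonChar p E (z * β ^ ((2*r) * i)))
  -- the Gaussian period as an explicit sum
  have ho2 : orderOf (β ^ 2) = 2*r*(r+1) := order_of_sq r hr β hβN
  have ho2' : orderOf (β ^ 2) ≠ 0 := by rw [ho2]; exact Nat.mul_ne_zero (by omega) (by omega)
  have hgp : gaussPeriod p E β 2 0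
      = ∑ j ∈ Finset.range (2*r*(r+1)), canonChar p E (β ^ (2*j)) := by
    unfold gaussPeriod
    have hfe : Finset.univ.filter (fun x : E => ∃ j : ℕ, x = β ^ (0 + 2 * j))
        = Finset.univ.filter (fun x : E => ∃ j : ℕ, x = (β ^ 2) ^ j) := by
      ext x
      simp [pow_mul]
    rw [hfe, sum_pow_filter (β ^ 2) ho2' (canonChar p E), ho2]
    refine Finset.sum_congr rfl fun j _ => ?_
    rw [← pow_mul]
  -- split the inner range `p + 1 = (r+1) + (r+1)` and apply `core_sum` twice
  have hsplit : ∀ k : ℕ,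
      ∑ i ∈ Finset.range (p+1), canonChar p E (β ^ ((2*r+2) * k) * β ^ ((2*r) * i))
        = (∑ i ∈ Finset.range (r+1), canonChar p E (β ^ ((2*r+2) * k + (2*r) * i + 0)))
          + ∑ i ∈ Finset.range (r+1),
              canonChar p E (β ^ ((2*r+2) * k + (2*r) * i + 2*r*(r+1))) := by
    intro k
    have hpp : p + 1 = (r+1) + (r+1) := by omega
    rw [hpp, Finset.sum_range_add]
    congr 1
    · refine Finset.sum_congr rfl fun i _ => ?_
      rw [← pow_add, add_zero]
    · refine Finset.sum_congr rfl fun i _ => ?_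
      rw [← pow_add]
      congr 2
      ring
  calc
    ∑ y ∈ Finset.univ.filter (fun y : ZMod p => y ≠ 0),
        ∑ i ∈ Finset.range (p + 1),
          canonChar p F (algebraMap (ZMod p) F y * α ^ ((p ^ m - 1) / (p + 1) * i))
      = ∑ y ∈ Finset.univ.filter (fun y : ZMod p => y ≠ 0),
          ∑ i ∈ Finset.range (p + 1),
            canonChar p E (algebraMap (ZMod p) E ((s : ZMod p) * y) * β ^ ((2*r) * i)) :=
        Finset.sum_congr rfl fun y _ => Finset.sum_congr rfl fun i _ => key y i
    _ = ∑ y ∈ Finset.univ.filter (fun y : ZMod p => y ≠ 0),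
          ∑ i ∈ Finset.range (p + 1),
            canonChar p E (algebraMap (ZMod p) E y * β ^ ((2*r) * i)) := habs
    _ = ∑ k ∈ Finset.range (2*r),
          ∑ i ∈ Finset.range (p + 1),
            canonChar p E (β ^ ((2*r+2) * k) * β ^ ((2*r) * i)) := hsu
    _ = ∑ k ∈ Finset.range (2*r),
          ((∑ i ∈ Finset.range (r+1), canonChar p E (β ^ ((2*r+2) * k + (2*r) * i + 0)))
            + ∑ i ∈ Finset.range (r+1),
                canonChar p E (β ^ ((2*r+2) * k + (2*r) * i + 2*r*(r+1)))) :=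
        Finset.sum_congr rfl fun k _ => hsplit k
    _ = (∑ k ∈ Finset.range (2*r), ∑ i ∈ Finset.range (r+1),
            canonChar p E (β ^ ((2*r+2) * k + (2*r) * i + 0)))
          + ∑ k ∈ Finset.range (2*r), ∑ i ∈ Finset.range (r+1),
              canonChar p E (β ^ ((2*r+2) * k + (2*r) * i + 2*r*(r+1))) :=
        Finset.sum_add_distrib
    _ = (∑ j ∈ Finset.range (2*r*(r+1)), canonChar p E (β ^ (2*j)))
          + ∑ j ∈ Finset.range (2*r*(r+1)), canonChar p E (β ^ (2*j)) := by
        rw [core_sum r hr β hβN 0 ⟨0, rfl⟩ (canonChar p E),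
          core_sum r hr β hβN (2*r*(r+1)) ⟨r*(r+1), by ring⟩ (canonChar p E)]
    _ = 2 * gaussPeriod p E β 2 0 := by
        rw [hgp]; ring
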